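/- For two normal distributions N(x,σ²) and N(y,σ²) on ℝ, the total variation distance satisfies ‖N(y,σ²) − N(x,σ²)‖_TV = 2 − 4Φ((x−y)/(2σ)) for x < y, and hence ‖N(y,σ²) − N(x,σ²)‖_TV ≤ |y−x|·√(2/π)/σ. -/

import Mathlib

open MeasureTheory ProbabilityTheory
open scoped NNReal ENNReal

/-- Total variation distance: sup over measurable functions bounded by 1. -/
noncomputable def TV {X : Type*} [MeasurableSpace X] (μ ν : Measure X) : ℝ :=
  sSup {r : ℝ | ∃ g : X → ℝ, Measurable g ∧ (∀ x, |g x| ≤ 1) ∧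
    r = |∫ x, g x ∂μ - ∫ x, g x ∂ν|}

/-- Standard normal cumulative distribution function. -/
noncomputable def stdNormalCDF (t : ℝ) : ℝ :=
  ((gaussianReal 0 1) (Set.Iic t)).toReal

section Aux

open Real Set
open scoped NNReal ENNReal

lemma aux_int (a : ℝ) (v : ℝ≥0) (hv : v ≠ 0) (g : ℝ → ℝ) :
    ∫ t, g t ∂(gaussianReal a v) = ∫ t, g t * gaussianPDFReal a v t := by
  rw [gaussianReal_of_var_ne_zero a hv]
  have h1 : (gaussianPDF a v) = fun t => ((fun t => (gaussianPDFReal a v t).toNNReal) t : ℝ≥0∞) := rfl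
  rw [h1, integral_withDensity_eq_integral_smul ((measurable_gaussianPDFReal a v).real_toNNReal) g]
  congr 1; ext t
  rw [NNReal.smul_def, smul_eq_mul, Real.coe_toNNReal _ (gaussianPDFReal_nonneg a v t), mul_comm]

lemma aux_map (a σ : ℝ) (hσ : 0 < σ) :
    gaussianReal a ⟨σ ^ 2, sq_nonneg σ⟩ = (gaussianReal 0 1).map (fun z => σ * z + a) := by
  have h1 : (gaussianReal 0 1).map (σ * ·) = gaussianReal 0 ⟨σ ^ 2, sq_nonneg σ⟩ := by
    rw [gaussianReal_map_const_mul σ]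
    norm_num
    rfl
  have h2 : ((gaussianReal 0 1).map (σ * ·)).map (· + a) = gaussianReal a ⟨σ ^ 2, sq_nonneg σ⟩ := by
    rw [h1]; exact (gaussianReal_map_add_const (μ := 0) (v := NNReal.mk _ (sq_nonneg σ)) a).trans (by rw [zero_add]; rfl)
  rw [← h2, Measure.map_map (by fun_prop) (by fun_prop)]
  rfl

lemma aux_Iic (a σ : ℝ) (hσ : 0 < σ) (t : ℝ) :
    (gaussianReal a ⟨σ ^ 2, sq_nonneg σ⟩) (Set.Iic t) = (gaussianReal 0 1) (Set.Iic ((t - a) / σ)) := by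
  rw [aux_map a σ hσ, Measure.map_apply (by fun_prop) measurableSet_Iic]
  congr 1
  ext z
  simp only [Set.mem_preimage, Set.mem_Iic]
  rw [le_div_iff₀ hσ]
  constructor <;> intro h <;> nlinarith

lemma aux_atom (a : ℝ) (v : ℝ≥0) (hv : v ≠ 0) (t : ℝ) : (gaussianReal a v) {t} = 0 :=
  gaussianReal_absolutelyContinuous a hv (Real.volume_singleton)

lemma aux_compl (a : ℝ) (v : ℝ≥0) (hv : v ≠ 0) (t : ℝ) :
    ((gaussianReal a v) (Set.Ici t)).toReal = 1 - ((gaussianReal a v) (Set.Iic t)).toReal := by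
  set μ := gaussianReal a v
  have h : μ (Set.Iic t ∪ Set.Ici t) + μ (Set.Iic t ∩ Set.Ici t) = μ (Set.Iic t) + μ (Set.Ici t) :=
    measure_union_add_inter _ measurableSet_Ici
  rw [Set.Iic_union_Ici, Set.Iic_inter_Ici, Set.Icc_self, measure_univ, aux_atom a v hv t,
    add_zero] at h
  have h1 := congrArg ENNReal.toReal h
  rw [ENNReal.toReal_add (measure_ne_top μ _) (measure_ne_top μ _), ENNReal.toReal_one] at h1
  linarith

lemma aux_symm (t : ℝ) : stdNormalCDF (-t) = 1 - stdNormalCDF t := by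
  have hmap : (gaussianReal 0 1).map (fun z => (-1 : ℝ) * z) = gaussianReal 0 1 := by
    have key := gaussianReal_map_const_mul (μ := 0) (v := 1) (-1 : ℝ)
    have e1 : ((-1 : ℝ)) * 0 = 0 := by norm_num
    have e2 : (NNReal.mk ((-1 : ℝ) ^ 2) (sq_nonneg _)) * 1 = 1 := by ext; norm_num
    rw [e1, e2] at key
    exact key
  have h1 : (gaussianReal 0 1) (Set.Iic (-t)) = (gaussianReal 0 1) (Set.Ici t) := by
    conv_lhs => rw [← hmap]
    rw [Measure.map_apply (by fun_prop) measurableSet_Iic]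
    congr 1
    ext z
    simp only [Set.mem_preimage, Set.mem_Iic, Set.mem_Ici]
    constructor <;> intro h <;> linarith
  rw [stdNormalCDF, h1, aux_compl 0 1 one_ne_zero t]
  rfl

lemma aux_half : stdNormalCDF 0 = 1 / 2 := by
  have := aux_symm 0
  rw [neg_zero] at this
  linarith

lemma aux_cdf_bound (c : ℝ) (hc : 0 ≤ c) :
    stdNormalCDF c - stdNormalCDF 0 ≤ c * (Real.sqrt (2 * Real.pi))⁻¹ := by
  have hsplit : (gaussianReal 0 1) (Set.Iic 0) + (gaussianReal 0 1) (Set.Ioc 0 c)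
      = (gaussianReal 0 1) (Set.Iic c) := by
    rw [← measure_union (Set.Iic_disjoint_Ioc le_rfl) measurableSet_Ioc,
      Set.Iic_union_Ioc_eq_Iic hc]
  have h2 : stdNormalCDF c - stdNormalCDF 0 = ((gaussianReal 0 1) (Set.Ioc 0 c)).toReal := by
    rw [stdNormalCDF, stdNormalCDF, ← hsplit,
      ENNReal.toReal_add (measure_ne_top _ _) (measure_ne_top _ _)]
    ring
  rw [h2, gaussianReal_apply_eq_integral 0 one_ne_zero,
    ENNReal.toReal_ofReal (setIntegral_nonneg measurableSet_Ioc
      (fun t _ => gaussianPDFReal_nonneg 0 1 t))]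
  have hb : ∀ t ∈ Set.Ioc (0:ℝ) c, gaussianPDFReal 0 1 t ≤ (Real.sqrt (2 * Real.pi))⁻¹ := by
    intro t _
    rw [gaussianPDFReal]
    have h1 : rexp (-(t - 0) ^ 2 / (2 * ((1:ℝ≥0):ℝ))) ≤ 1 := by
      rw [Real.exp_le_one_iff]
      apply div_nonpos_of_nonpos_of_nonneg (by nlinarith [sq_nonneg (t - 0)]) (by positivity)
    have he : (2 : ℝ) * π * ((1:ℝ≥0):ℝ) = 2 * π := by norm_num
    rw [he]
    calc (√(2 * π))⁻¹ * rexp (-(t - 0) ^ 2 / (2 * ((1:ℝ≥0):ℝ)))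
        ≤ (√(2 * π))⁻¹ * 1 := by
          apply mul_le_mul_of_nonneg_left h1 (by positivity)
      _ = (√(2 * π))⁻¹ := mul_one _
  calc ∫ t in Set.Ioc 0 c, gaussianPDFReal 0 1 t
      ≤ ∫ _ in Set.Ioc 0 c, (Real.sqrt (2 * Real.pi))⁻¹ := by
        apply setIntegral_mono_on (integrable_gaussianPDFReal 0 1).integrableOn
          (integrableOn_const (by rw [Real.volume_Ioc]; exact ENNReal.ofReal_ne_top))
          measurableSet_Ioc hb
    _ = c * (Real.sqrt (2 * Real.pi))⁻¹ := by
        rw [setIntegral_const, measureReal_def, Real.volume_Ioc, ENNReal.toReal_ofReal (by linarith), smul_eq_mul,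
          sub_zero]

lemma aux_sign (x y : ℝ) (hxy : x < y) (v : ℝ≥0) (hv0 : 0 < (v:ℝ)) (t : ℝ) :
    0 ≤ gaussianPDFReal y v t - gaussianPDFReal x v t ↔ (x + y) / 2 ≤ t := by
  have hc : 0 < (√(2 * π * (v:ℝ)))⁻¹ := by positivity
  rw [gaussianPDFReal, gaussianPDFReal, sub_nonneg, mul_le_mul_iff_of_pos_left hc, Real.exp_le_exp,
    div_le_div_iff_of_pos_right (by positivity : (0:ℝ) < 2 * (v:ℝ)), neg_le_neg_iff]
  constructor <;> intro h <;> nlinarith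

end Aux

theorem stmt10 (σ : ℝ) (hσ : 0 < σ) (x y : ℝ) (hxy : x < y) :
    TV (gaussianReal y ⟨σ ^ 2, sq_nonneg σ⟩) (gaussianReal x ⟨σ ^ 2, sq_nonneg σ⟩) =
      2 - 4 * stdNormalCDF ((x - y) / (2 * σ)) ∧
    TV (gaussianReal y ⟨σ ^ 2, sq_nonneg σ⟩) (gaussianReal x ⟨σ ^ 2, sq_nonneg σ⟩) ≤
      |y - x| * Real.sqrt (2 / Real.pi) / σ := by
  have hπ := Real.pi_pos
  set v : ℝ≥0 := ⟨σ ^ 2, sq_nonneg σ⟩ with hv_def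
  have hv0 : (0:ℝ) < (v:ℝ) := by
    have : (v:ℝ) = σ ^ 2 := rfl
    nlinarith
  have hv : v ≠ 0 := by
    intro h
    rw [h] at hv0
    simp at hv0
  set μ := gaussianReal y v with hμ_def
  set ν := gaussianReal x v with hν_def
  set m : ℝ := (x + y) / 2 with hm_def
  set d : ℝ → ℝ := fun t => gaussianPDFReal y v t - gaussianPDFReal x v t with hd_def
  have hdint : Integrable d := (integrable_gaussianPDFReal y v).sub (integrable_gaussianPDFReal x v)
  set V : ℝ := ∫ t, |d t| with hV_def
  have hV0 : 0 ≤ V := integral_nonneg fun t => abs_nonneg _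
  -- product integrability
  have hprod : ∀ g : ℝ → ℝ, Measurable g → (∀ t, |g t| ≤ 1) → Integrable (fun t => g t * d t) := by
    intro g hg hb
    exact hdint.bdd_mul hg.aestronglyMeasurable (ae_of_all _ fun t => by rw [Real.norm_eq_abs]; exact hb t)
  -- key equality
  have key : ∀ g : ℝ → ℝ, Measurable g → (∀ t, |g t| ≤ 1) →
      (∫ t, g t ∂μ) - ∫ t, g t ∂ν = ∫ t, g t * d t := by
    intro g hg hb
    have i1 : Integrable (fun t => g t * gaussianPDFReal y v t) :=
      (integrable_gaussianPDFReal y v).bdd_mul hg.aestronglyMeasurable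
        (ae_of_all _ fun t => by rw [Real.norm_eq_abs]; exact hb t)
    have i2 : Integrable (fun t => g t * gaussianPDFReal x v t) :=
      (integrable_gaussianPDFReal x v).bdd_mul hg.aestronglyMeasurable
        (ae_of_all _ fun t => by rw [Real.norm_eq_abs]; exact hb t)
    rw [hμ_def, hν_def, aux_int y v hv g, aux_int x v hv g, ← integral_sub i1 i2]
    congr 1
    ext t
    simp only [hd_def]
    ring
  -- upper bound
  have bound : ∀ g : ℝ → ℝ, Measurable g → (∀ t, |g t| ≤ 1) →
      |(∫ t, g t ∂μ) - ∫ t, g t ∂ν| ≤ V := by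
    intro g hg hb
    rw [key g hg hb]
    calc |∫ t, g t * d t| ≤ ∫ t, |g t * d t| := by
          have h := norm_integral_le_integral_norm (μ := volume) (fun t => g t * d t)
          simp only [Real.norm_eq_abs] at h
          exact h
      _ ≤ ∫ t, |d t| := by
          apply integral_mono (hprod g hg hb).abs hdint.abs
          intro t
          show |g t * d t| ≤ |d t|
          rw [abs_mul]
          calc |g t| * |d t| ≤ 1 * |d t| := mul_le_mul_of_nonneg_right (hb t) (abs_nonneg _)
            _ = |d t| := one_mul _
  -- the optimal g
  set g₀ : ℝ → ℝ := fun t => Set.indicator (Set.Ici m) (fun _ => (2:ℝ)) t - 1 with hg₀_def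
  have hg₀m : Measurable g₀ := (measurable_const.indicator measurableSet_Ici).sub measurable_const
  have hg₀b : ∀ t, |g₀ t| ≤ 1 := by
    intro t
    by_cases h : t ∈ Set.Ici m <;>
      simp [hg₀_def, Set.indicator_of_mem, Set.indicator_of_notMem, h] <;> norm_num
  have hg₀d : ∀ t, g₀ t * d t = |d t| := by
    intro t
    by_cases h : m ≤ t
    · have h0 : 0 ≤ d t := (aux_sign x y hxy v hv0 t).mpr h
      rw [abs_of_nonneg h0]
      simp [hg₀_def, Set.indicator_of_mem (Set.mem_Ici.mpr h)]
      ring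
    · have h0 : d t ≤ 0 := by
        by_contra hcon
        exact h ((aux_sign x y hxy v hv0 t).mp (le_of_lt (lt_of_not_ge hcon)))
      rw [abs_of_nonpos h0]
      simp [hg₀_def, Set.indicator_of_notMem (fun hmem => h (Set.mem_Ici.mp hmem))]
  have hVd : ∫ t, g₀ t * d t = V := by
    rw [hV_def]
    congr 1
    ext t
    exact hg₀d t
  have hVeq : (∫ t, g₀ t ∂μ) - ∫ t, g₀ t ∂ν = V := by
    rw [key g₀ hg₀m hg₀b, hVd]
  -- TV = V
  have hTV : TV μ ν = V := by
    apply le_antisymm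
    · apply csSup_le
      · exact ⟨|(∫ t, (0:ℝ) ∂μ) - ∫ t, (0:ℝ) ∂ν|, fun _ => (0:ℝ), measurable_const,
          fun t => by norm_num, rfl⟩
      · rintro r ⟨g, hg, hb, rfl⟩
        exact bound g hg hb
    · apply le_csSup
      · exact ⟨V, by rintro r ⟨g, hg, hb, rfl⟩; exact bound g hg hb⟩
      · exact ⟨g₀, hg₀m, hg₀b, by rw [hVeq, abs_of_nonneg hV0]⟩
  -- compute V
  have hint_g₀ : ∀ ρ : Measure ℝ, IsProbabilityMeasure ρ →
      ∫ t, g₀ t ∂ρ = 2 * (ρ (Set.Ici m)).toReal - 1 := by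
    intro ρ hρ
    have : ∫ t, g₀ t ∂ρ =
        (∫ t, Set.indicator (Set.Ici m) (fun _ => (2:ℝ)) t ∂ρ) - ∫ _, (1:ℝ) ∂ρ :=
      integral_sub ((integrable_const (2:ℝ)).indicator measurableSet_Ici) (integrable_const 1)
    rw [this, integral_indicator_const _ measurableSet_Ici, integral_const, probReal_univ, measureReal_def]
    simp [smul_eq_mul, mul_comm]
  set d₀ : ℝ := (x - y) / (2 * σ) with hd₀_def
  have hμIic : (μ (Set.Iic m)).toReal = stdNormalCDF d₀ := by
    rw [hμ_def, hv_def, aux_Iic y σ hσ m, stdNormalCDF]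
    congr 2
    rw [hm_def, hd₀_def]
    field_simp
    ring
  have hνIic : (ν (Set.Iic m)).toReal = stdNormalCDF (-d₀) := by
    rw [hν_def, hv_def, aux_Iic x σ hσ m, stdNormalCDF]
    congr 2
    rw [hm_def, hd₀_def]
    field_simp
    ring
  have hVval : V = 2 - 4 * stdNormalCDF d₀ := by
    rw [← hVeq, hint_g₀ μ (by rw [hμ_def]; infer_instance), hint_g₀ ν (by rw [hν_def]; infer_instance),
      hμ_def, hν_def, aux_compl y v hv m, aux_compl x v hv m, ← hμ_def, ← hν_def, hμIic, hνIic,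
      aux_symm d₀]
    ring
  refine ⟨by rw [hTV, hVval], ?_⟩
  rw [hTV, hVval]
  -- inequality
  set c : ℝ := (y - x) / (2 * σ) with hc_def
  have hc0 : 0 ≤ c := by
    rw [hc_def]
    apply div_nonneg (by linarith) (by linarith)
  have hd₀c : d₀ = -c := by rw [hd₀_def, hc_def]; ring
  have hΦ : stdNormalCDF d₀ = 1 - stdNormalCDF c := by rw [hd₀c, aux_symm]
  have hbd := aux_cdf_bound c hc0
  rw [aux_half] at hbd
  have habs : |y - x| = y - x := abs_of_nonneg (by linarith)
  have hsq : Real.sqrt (2 / Real.pi) = 2 * (Real.sqrt (2 * Real.pi))⁻¹ := by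
    rw [show (2:ℝ) / Real.pi = (2 * (Real.sqrt (2 * Real.pi))⁻¹) ^ 2 by
      rw [mul_pow, inv_pow, Real.sq_sqrt (by positivity)]
      field_simp]
    exact Real.sqrt_sq (by positivity)
  rw [hΦ, habs, hsq]
  have hyx : y - x = 2 * σ * c := by
    rw [hc_def]
    field_simp
  rw [hyx]
  have hfin : 2 * σ * c * (2 * (Real.sqrt (2 * Real.pi))⁻¹) / σ
      = 4 * (c * (Real.sqrt (2 * Real.pi))⁻¹) := by
    field_simp
    ring
  rw [hfin]
  linarith
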